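/- Let each f_i : ℝ^p → ℝ be μ-strongly convex (μ ≥ 0) and L-smooth, and let f = (1/n)∑_{i=1}^n f_i with minimizer x*. Then for any points x_1,…,x_n with mean x̄, (1/n)∑_{i=1}^n ⟨x̄ - x*, ∇f_i(x_i)⟩ ≥ f(x̄) - f(x*) + (μ/2n)∑_{i=1}^n ‖x_i - x*‖² - (L/2n)∑_{i=1}^n ‖x_i - x̄‖². -/

import Mathlib

open scoped RealInnerProductSpace

/-- Let each `fᵢ` be `μ`-strongly convex (`μ ≥ 0`) and `L`-smooth, and `x*` the minimizer of
`f = (1/n)∑ fᵢ`. Then for points `x₁,…,xₙ` with mean `x̄`,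
`(1/n)∑ ⟨x̄ - x*, ∇fᵢ(xᵢ)⟩ ≥ f(x̄) - f(x*) + (μ/2n)∑ ‖xᵢ - x*‖² - (L/2n)∑ ‖xᵢ - x̄‖²`. -/
theorem stmt_4 {p n : ℕ} (hn : 0 < n) (μ L : ℝ) (hμ : 0 ≤ μ) (hL : 0 < L)
    (f : Fin n → EuclideanSpace ℝ (Fin p) → ℝ)
    (g : Fin n → EuclideanSpace ℝ (Fin p) → EuclideanSpace ℝ (Fin p))
    (hsc : ∀ i x y, f i x + ⟪g i x, y - x⟫ + μ / 2 * ‖y - x‖ ^ 2 ≤ f i y)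
    (hsmooth : ∀ i x y, f i y ≤ f i x + ⟪g i x, y - x⟫ + L / 2 * ‖y - x‖ ^ 2)
    (xstar : EuclideanSpace ℝ (Fin p))
    (hmin : ∀ y, (n : ℝ)⁻¹ * ∑ i, f i xstar ≤ (n : ℝ)⁻¹ * ∑ i, f i y)
    (x : Fin n → EuclideanSpace ℝ (Fin p))
    (xbar : EuclideanSpace ℝ (Fin p)) (hxbar : xbar = (n : ℝ)⁻¹ • ∑ i, x i) :
    (n : ℝ)⁻¹ * ∑ i, f i xbar - (n : ℝ)⁻¹ * ∑ i, f i xstar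
        + μ / (2 * n) * ∑ i, ‖x i - xstar‖ ^ 2
        - L / (2 * n) * ∑ i, ‖x i - xbar‖ ^ 2
      ≤ (n : ℝ)⁻¹ * ∑ i, ⟪xbar - xstar, g i (x i)⟫ := by
  have key : ∀ i, f i xbar - f i xstar + μ / 2 * ‖x i - xstar‖ ^ 2
      - L / 2 * ‖x i - xbar‖ ^ 2 ≤ ⟪xbar - xstar, g i (x i)⟫ := by
    intro i
    have A := hsmooth i (x i) xbar
    have B := hsc i (x i) xstar
    have h1 : ⟪g i (x i), xbar - x i⟫ - ⟪g i (x i), xstar - x i⟫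
        = ⟪xbar - xstar, g i (x i)⟫ := by
      simp only [inner_sub_left, inner_sub_right, real_inner_comm (g i (x i))]
      ring
    have h2 : ‖xbar - x i‖ = ‖x i - xbar‖ := norm_sub_rev _ _
    have h3 : ‖xstar - x i‖ = ‖x i - xstar‖ := norm_sub_rev _ _
    rw [h2] at A
    rw [h3] at B
    linarith
  have hsum := Finset.sum_le_sum (fun i (_ : i ∈ Finset.univ) => key i)
  rw [Finset.sum_sub_distrib, Finset.sum_add_distrib, Finset.sum_sub_distrib,
    ← Finset.mul_sum, ← Finset.mul_sum] at hsum
  have hnpos : (0 : ℝ) < (n : ℝ) := by exact_mod_cast hn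
  have h := mul_le_mul_of_nonneg_left hsum (le_of_lt (inv_pos.2 hnpos))
  have e1 : μ / (2 * n) = (n : ℝ)⁻¹ * (μ / 2) := by field_simp
  have e2 : L / (2 * n) = (n : ℝ)⁻¹ * (L / 2) := by field_simp
  rw [e1, e2]
  nlinarith [h]
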